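/- Let g = Σ_{ℓ=0}^{n} a_ℓ(x)·y^ℓ ∈ ℂ[[x]][y] with a_n ≠ 0 and 0 ≤ n < e_1. Then: (1) there is exactly one index τ_0 ∈ {0, …, n} with a_{τ_0} ≠ 0 and ϑ_{ι_1}(g) = ϑ_{ι_1}(a_{τ_0}·y^{τ_0}); (2) for every j = 1, …, s, ϑ_{ι_j}(g) = (e_j/e_1)·ϑ_{ι_1}(g); (3) if τ_0 ≠ 0 then ϑ_{ι_j}(∂g/∂y) = ϑ_{ι_j}(g) − e_jλ_1 for every j = 1, …, s, while if τ_0 = 0 then ϑ_{ι_j}(∂g/∂y) > ϑ_{ι_j}(g) − e_jλ_1 for every j = 1, …, s. -/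

import Mathlib

noncomputable def psOrdQ (f : PowerSeries ℂ) : WithTop ℚ :=
  WithTop.map (fun m : ℕ => (m : ℚ)) f.order

/-- Substitution x ↦ t^e on power series (for e ≥ 1). -/
noncomputable def expandPS (e : ℕ) (f : PowerSeries ℂ) : PowerSeries ℂ :=
  PowerSeries.mk fun n => if e ∣ n then PowerSeries.coeff (n / e) f else 0

/-- Truncated parametrization pullback on ℂ[[x]][y]: x ↦ t^e, y ↦ yi. -/
noncomputable def iotaPS (e : ℕ) (yi : PowerSeries ℂ) (g : Polynomial (PowerSeries ℂ)) :
    PowerSeries ℂ :=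
  ∑ ℓ ∈ g.support, expandPS e (g.coeff ℓ) * yi ^ ℓ

lemma coeff_expandPS (e : ℕ) (f : PowerSeries ℂ) (n : ℕ) :
    PowerSeries.coeff n (expandPS e f) =
      if e ∣ n then PowerSeries.coeff (n / e) f else 0 := by
  simp [expandPS]

lemma order_expandPS {e : ℕ} (he : 0 < e) {f : PowerSeries ℂ} {n : ℕ}
    (h : f.order = n) : (expandPS e f).order = (e * n : ℕ) := by
  rw [PowerSeries.order_eq_nat] at h ⊢
  obtain ⟨h1, h2⟩ := h
  refine ⟨?_, ?_⟩
  · rw [coeff_expandPS, if_pos ⟨n, rfl⟩, Nat.mul_div_cancel_left n he]; exact h1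
  · intro i hi
    rw [coeff_expandPS]
    split_ifs with hd
    · obtain ⟨q, rfl⟩ := hd
      rw [Nat.mul_div_cancel_left q he]
      exact h2 q (by exact Nat.lt_of_mul_lt_mul_left hi)
    · rfl

lemma order_finsum {ι : Type*} (F : Finset ι) (f : ι → PowerSeries ℂ) (τ : ι) (hτ : τ ∈ F)
    (N : ℕ) (hN : (f τ).order = N)
    (hlt : ∀ σ ∈ F, σ ≠ τ → (N : ℕ∞) < (f σ).order) :
    (∑ σ ∈ F, f σ).order = N := by
  rw [PowerSeries.order_eq_nat]
  constructor
  · rw [map_sum, Finset.sum_eq_single τ]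
    · exact (PowerSeries.order_eq_nat.mp hN).1
    · intro σ hσ hne
      exact PowerSeries.coeff_of_lt_order _ (hlt σ hσ hne)
    · exact fun h => absurd hτ h
  · intro i hi
    rw [map_sum]
    refine Finset.sum_eq_zero fun σ hσ => ?_
    by_cases hc : σ = τ
    · subst hc
      exact PowerSeries.coeff_of_lt_order _ (by rw [hN]; exact_mod_cast hi)
    · exact PowerSeries.coeff_of_lt_order _
        ((by exact_mod_cast hi : (i : ℕ∞) < (N : ℕ∞)).trans (hlt σ hσ hc))

lemma coeff_comp_X_pow (p : Polynomial ℂ) {d : ℕ} (hd : 0 < d) (b : ℕ) :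
    (p.comp (Polynomial.X ^ d)).coeff (d * b) = p.coeff b := by
  rw [Polynomial.comp_eq_sum_left, Polynomial.sum, Polynomial.finset_sum_coeff]
  have h : ∀ i ∈ p.support,
      (Polynomial.C (p.coeff i) * (Polynomial.X ^ d) ^ i).coeff (d * b)
        = if b = i then p.coeff i else 0 := by
    intro i _
    rw [← pow_mul, Polynomial.coeff_C_mul, Polynomial.coeff_X_pow]
    by_cases hib : b = i
    · simp [hib]
    · rw [if_neg (fun hdb => hib (Nat.eq_of_mul_eq_mul_left hd (by omega))), if_neg hib,
        mul_zero]
  rw [Finset.sum_congr rfl h, Finset.sum_ite_eq]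
  split_ifs with hb
  · rfl
  · exact (Polynomial.notMem_support_iff.mp hb).symm

lemma tau_unique {e1 E : ℕ} (hcop : Nat.Coprime E e1) {x x' τ τ' : ℕ}
    (hτ : τ < e1) (hτ' : τ' < e1) (h : e1 * x + τ * E = e1 * x' + τ' * E) : τ = τ' := by
  haveI : NeZero e1 := ⟨by omega⟩
  have hc : ((e1 * x + τ * E : ℕ) : ZMod e1) = ((e1 * x' + τ' * E : ℕ) : ZMod e1) := by
    exact_mod_cast congrArg _ h
  push_cast at hc
  simp [ZMod.natCast_self] at hc
  have hu : IsUnit ((E : ℕ) : ZMod e1) := (ZMod.unitOfCoprime E hcop).isUnit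
  have : ((τ : ℕ) : ZMod e1) = ((τ' : ℕ) : ZMod e1) := hu.mul_left_cancel (by
    linear_combination hc)
  calc τ = ((τ : ℕ) : ZMod e1).val := (ZMod.val_cast_of_lt hτ).symm
    _ = ((τ' : ℕ) : ZMod e1).val := by rw [this]
    _ = τ' := ZMod.val_cast_of_lt hτ'

lemma psOrdQ_coe {f : PowerSeries ℂ} {N : ℕ} (h : f.order = N) :
    psOrdQ f = ((N : ℚ) : WithTop ℚ) := by
  rw [psOrdQ, h]
  rfl

theorem stmt_15
    (s : ℕ) (hs : 1 ≤ s)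
    (lam : ℕ → ℚ) (hlam1 : 1 < lam 1)
    (hlam_mono : ∀ i, 1 ≤ i → i < s → lam i < lam (i + 1))
    (M : ℕ → AddSubgroup ℚ)
    (hM : ∀ i, M i = AddSubgroup.closure ({1} ∪ lam '' Set.Icc 1 i))
    (hlamM : ∀ i, 1 ≤ i → i ≤ s → lam i ∉ M (i - 1))
    (kk : ℕ → ℕ)
    (hkk : ∀ i, 1 ≤ i → i ≤ s →
      IsLeast {m : ℕ | 0 < m ∧ (m : ℚ) * lam i ∈ M (i - 1)} (kk i))
    (e : ℕ → ℕ) (he0 : e 0 = 1)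
    (he : ∀ i, 1 ≤ i → i ≤ s → e i = kk i * e (i - 1))
    (gam : ℕ → ℕ → ℚ)
    (hgam1 : ∀ j, 1 ≤ j → j ≤ s → gam j 1 = (e j : ℚ) * lam 1)
    (hgam : ∀ j, 1 ≤ j → j ≤ s → ∀ ℓ, 1 ≤ ℓ → ℓ ≤ j - 1 →
      gam j (ℓ + 1) = (kk ℓ : ℚ) * gam j ℓ - (e j : ℚ) * lam ℓ + (e j : ℚ) * lam (ℓ + 1))
    (c : ℕ → ℂ) (hc : ∀ ℓ, 1 ≤ ℓ → ℓ ≤ s → c ℓ ≠ 0)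
    (φ : ℕ → Polynomial ℂ)
    (hφ0 : ∀ ℓ, 1 ≤ ℓ → ℓ ≤ s → (φ ℓ).coeff 0 = 0)
    (hφsupp : ∀ ℓ, 1 ≤ ℓ → ℓ ≤ s → ∀ a ∈ (φ ℓ).support,
      ∃ m ∈ M ℓ, (a : ℚ) = (e s : ℚ) * m)
    (hφord : ∀ ℓ, 1 ≤ ℓ → ℓ ≤ s → ∀ a ∈ (φ ℓ).support, (e s : ℚ) * lam ℓ < (a : ℚ))
    (hφdeg : ∀ ℓ, 1 ≤ ℓ → ℓ < s → ∀ a ∈ (φ ℓ).support, (a : ℚ) < (e s : ℚ) * lam (ℓ + 1))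
    (E : ℕ → ℕ → ℕ)
    (hE : ∀ i, 1 ≤ i → i ≤ s → ∀ ℓ, 1 ≤ ℓ → ℓ ≤ i → (E i ℓ : ℚ) = (e i : ℚ) * lam ℓ)
    (φs : ℕ → ℕ → Polynomial ℂ)
    (hφs : ∀ i, 1 ≤ i → i ≤ s → ∀ ℓ, 1 ≤ ℓ → ℓ ≤ i →
      (φs i ℓ).comp (Polynomial.X ^ (e s / e i)) = φ ℓ)
    (Y : ℕ → Polynomial ℂ)
    (hY : ∀ i, 1 ≤ i → i ≤ s →
      Y i = ∑ ℓ ∈ Finset.Icc 1 i, (Polynomial.C (c ℓ) * Polynomial.X ^ E i ℓ + φs i ℓ)) :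
    ∀ g : Polynomial (PowerSeries ℂ), g ≠ 0 → g.natDegree < e 1 →
      ∃ (τ : ℕ) (m : ℚ),
        τ ≤ g.natDegree ∧ g.coeff τ ≠ 0 ∧
        PowerSeries.order (iotaPS (e 1) ((Y 1 : Polynomial ℂ) : PowerSeries ℂ) g) =
          PowerSeries.order (iotaPS (e 1) ((Y 1 : Polynomial ℂ) : PowerSeries ℂ)
            (Polynomial.C (g.coeff τ) * Polynomial.X ^ τ)) ∧
        (∀ τ' ≤ g.natDegree, g.coeff τ' ≠ 0 →
          PowerSeries.order (iotaPS (e 1) ((Y 1 : Polynomial ℂ) : PowerSeries ℂ) g) =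
            PowerSeries.order (iotaPS (e 1) ((Y 1 : Polynomial ℂ) : PowerSeries ℂ)
              (Polynomial.C (g.coeff τ') * Polynomial.X ^ τ')) →
          τ' = τ) ∧
        psOrdQ (iotaPS (e 1) ((Y 1 : Polynomial ℂ) : PowerSeries ℂ) g) = (m : WithTop ℚ) ∧
        ∀ j, 1 ≤ j → j ≤ s →
          psOrdQ (iotaPS (e j) ((Y j : Polynomial ℂ) : PowerSeries ℂ) g) =
            (((e j : ℚ) / (e 1 : ℚ) * m : ℚ) : WithTop ℚ) ∧
          (τ ≠ 0 →
            psOrdQ (iotaPS (e j) ((Y j : Polynomial ℂ) : PowerSeries ℂ)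
                (Polynomial.derivative g)) =
              (((e j : ℚ) / (e 1 : ℚ) * m - (e j : ℚ) * lam 1 : ℚ) : WithTop ℚ)) ∧
          (τ = 0 →
            (((e j : ℚ) / (e 1 : ℚ) * m - (e j : ℚ) * lam 1 : ℚ) : WithTop ℚ) <
              psOrdQ (iotaPS (e j) ((Y j : Polynomial ℂ) : PowerSeries ℂ)
                (Polynomial.derivative g))) := by
  classical
  -- basic positivity / divisibility facts
  have epos : ∀ i, i ≤ s → 0 < e i := by
    intro i
    induction i with
    | zero => intro _; simp [he0]
    | succ n ih =>
      intro hi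
      rw [he (n + 1) (by omega) hi]
      simp only [Nat.add_sub_cancel]
      exact Nat.mul_pos (hkk (n + 1) (by omega) hi).1.1 (ih (by omega))
  have edvd : ∀ j, j ≤ s → ∀ i, i ≤ j → e i ∣ e j := by
    intro j
    induction j with
    | zero => intro _ i hi; interval_cases i; exact dvd_rfl
    | succ n ih =>
      intro hj i hi
      rcases Nat.lt_or_ge i (n + 1) with h | h
      · have hd := ih (by omega) i (by omega)
        rw [he (n + 1) (by omega) hj]
        simp only [Nat.add_sub_cancel]
        exact hd.mul_left _
      · have : i = n + 1 := by omega
        subst this; exact dvd_rfl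
  have lam_le : ∀ ℓ, 1 ≤ ℓ → ℓ ≤ s → lam 1 ≤ lam ℓ := by
    intro ℓ
    induction ℓ with
    | zero => omega
    | succ n ih =>
      intro _ hn
      rcases Nat.eq_or_lt_of_le (show 1 ≤ n + 1 by omega) with h | h
      · rw [← h]
      · exact (ih (by omega) (by omega)).trans (le_of_lt (hlam_mono n (by omega) (by omega)))
  have lam_lt : ∀ ℓ, 2 ≤ ℓ → ℓ ≤ s → lam 1 < lam ℓ := by
    intro ℓ h2 hℓ
    have h1 : lam 1 ≤ lam (ℓ - 1) := lam_le (ℓ - 1) (by omega) (by omega)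
    have h2' : lam (ℓ - 1) < lam (ℓ - 1 + 1) := hlam_mono (ℓ - 1) (by omega) (by omega)
    have : ℓ - 1 + 1 = ℓ := by omega
    rw [this] at h2'
    exact h1.trans_lt h2'
  -- coprimality of E 1 1 and e 1
  have hE11 : (E 1 1 : ℚ) = (e 1 : ℚ) * lam 1 := hE 1 le_rfl hs 1 le_rfl le_rfl
  have he1kk : e 1 = kk 1 := by rw [he 1 le_rfl hs]; simp [he0]
  have e1pos : 0 < e 1 := epos 1 hs
  have hM0 : ∀ q : ℚ, q ∈ M 0 ↔ ∃ z : ℤ, (z : ℚ) = q := by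
    intro q
    rw [hM 0]
    have hempty : Set.Icc 1 0 = (∅ : Set ℕ) := Set.Icc_eq_empty (by omega)
    rw [hempty]
    simp [AddSubgroup.mem_closure_singleton, zsmul_eq_mul]
  have cop : Nat.Coprime (E 1 1) (e 1) := by
    by_contra hcop
    set d := Nat.gcd (E 1 1) (e 1) with hd
    have hdpos : 0 < d := Nat.gcd_pos_of_pos_right _ e1pos
    have hd2 : 2 ≤ d := by
      rcases Nat.lt_or_ge d 2 with h | h
      · exact absurd (by unfold Nat.Coprime; omega) hcop
      · exact h
    have hdE : d ∣ E 1 1 := Nat.gcd_dvd_left _ _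
    have hde : d ∣ e 1 := Nat.gcd_dvd_right _ _
    have hdq : (d : ℚ) ≠ 0 := by exact_mod_cast hdpos.ne'
    have hmem : ((e 1 / d : ℕ) : ℚ) * lam 1 ∈ M 0 := by
      rw [hM0]
      refine ⟨((E 1 1 / d : ℕ) : ℤ), ?_⟩
      rw [Int.cast_natCast, Nat.cast_div hdE hdq, Nat.cast_div hde hdq, hE11]
      ring
    have hkk1 := (hkk 1 le_rfl hs).2 ⟨Nat.div_pos (Nat.le_of_dvd e1pos hde) hdpos, by
      simpa using hmem⟩
    have : e 1 / d < e 1 := Nat.div_lt_self e1pos hd2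
    omega
  -- key identity between E j 1 and E 1 1
  have EJ : ∀ j, 1 ≤ j → j ≤ s → e 1 * E j 1 = e j * E 1 1 := by
    intro j hj1 hjs
    have h1 : ((e 1 * E j 1 : ℕ) : ℚ) = ((e j * E 1 1 : ℕ) : ℚ) := by
      push_cast
      rw [hE j hj1 hjs 1 le_rfl hj1, hE11]
      ring
    exact_mod_cast h1
  -- support bound for φs
  have hφsOrd : ∀ j, 1 ≤ j → j ≤ s → ∀ ℓ, 1 ≤ ℓ → ℓ ≤ j → ∀ b : ℕ,
      (φs j ℓ).coeff b ≠ 0 → (e j : ℚ) * lam ℓ < b := by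
    intro j hj1 hjs ℓ h1 hℓ b hb
    have hdvd : e j ∣ e s := edvd s le_rfl j hjs
    set d := e s / e j with hdd
    have hdm : d * e j = e s := Nat.div_mul_cancel hdvd
    have hdpos : 0 < d :=
      Nat.div_pos (Nat.le_of_dvd (epos s le_rfl) hdvd) (epos j hjs)
    have hcoeff : (φ ℓ).coeff (d * b) = (φs j ℓ).coeff b := by
      rw [← hφs j hj1 hjs ℓ h1 hℓ]
      exact coeff_comp_X_pow _ hdpos b
    have hmem : d * b ∈ (φ ℓ).support := Polynomial.mem_support_iff.mpr (by
      rw [hcoeff]; exact hb)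
    have hlt := hφord ℓ h1 (hℓ.trans hjs) (d * b) hmem
    have hes : (e s : ℚ) = (d : ℚ) * (e j : ℚ) := by exact_mod_cast hdm.symm
    rw [hes] at hlt
    push_cast at hlt
    have hdq : (0 : ℚ) < d := by exact_mod_cast hdpos
    nlinarith [hlt]
  -- coefficients of Y j below and at E j 1
  have coeffY : ∀ j, 1 ≤ j → j ≤ s → ∀ n, n ≤ E j 1 →
      (Y j).coeff n = if n = E j 1 then c 1 else 0 := by
    intro j hj1 hjs n hn
    have ejq : (0 : ℚ) < (e j : ℚ) := by exact_mod_cast epos j hjs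
    have hEj1 : (E j 1 : ℚ) = (e j : ℚ) * lam 1 := hE j hj1 hjs 1 le_rfl hj1
    rw [hY j hj1 hjs, Polynomial.finset_sum_coeff, Finset.sum_eq_single 1]
    · rw [Polynomial.coeff_add, Polynomial.coeff_C_mul, Polynomial.coeff_X_pow]
      have hz : (φs j 1).coeff n = 0 := by
        by_contra h
        have h2 := hφsOrd j hj1 hjs 1 le_rfl hj1 n h
        rw [← hEj1] at h2
        have : E j 1 < n := by exact_mod_cast h2
        omega
      rw [hz, add_zero]
      split_ifs <;> simp
    · intro ℓ hℓ hne
      have hℓ2 : 2 ≤ ℓ ∧ ℓ ≤ j := by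
        simp only [Finset.mem_Icc] at hℓ
        omega
      rw [Polynomial.coeff_add, Polynomial.coeff_C_mul, Polynomial.coeff_X_pow]
      have hlam1ℓ : lam 1 ≤ lam ℓ := lam_le ℓ (by omega) (hℓ2.2.trans hjs)
      have hEgt : E j 1 < E j ℓ := by
        have h2 := hE j hj1 hjs ℓ (by omega) hℓ2.2
        have : (E j 1 : ℚ) < (E j ℓ : ℚ) := by
          rw [hEj1, h2]
          exact mul_lt_mul_of_pos_left (lam_lt ℓ hℓ2.1 (hℓ2.2.trans hjs)) ejq
        exact_mod_cast this
      rw [if_neg (by omega), mul_zero, zero_add]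
      by_contra h
      have h2 := hφsOrd j hj1 hjs ℓ (by omega) hℓ2.2 n h
      have hnq : (n : ℚ) ≤ (E j 1 : ℚ) := by exact_mod_cast hn
      rw [hEj1] at hnq
      nlinarith
    · intro h
      exact absurd (Finset.mem_Icc.mpr ⟨le_rfl, hj1⟩) h
  have ordY : ∀ j, 1 ≤ j → j ≤ s →
      ((Y j : Polynomial ℂ) : PowerSeries ℂ).order = (E j 1 : ℕ∞) := by
    intro j hj1 hjs
    rw [PowerSeries.order_eq_nat]
    constructor
    · rw [Polynomial.coeff_coe, coeffY j hj1 hjs _ le_rfl, if_pos rfl]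
      exact hc 1 le_rfl hs
    · intro i hi
      rw [Polynomial.coeff_coe, coeffY j hj1 hjs _ (le_of_lt hi), if_neg (by omega)]
  have ordYpow : ∀ j, 1 ≤ j → j ≤ s → ∀ ℓ : ℕ,
      (((Y j : Polynomial ℂ) : PowerSeries ℂ) ^ ℓ).order = ((ℓ * E j 1 : ℕ) : ℕ∞) := by
    intro j hj1 hjs ℓ
    induction ℓ with
    | zero => simp [PowerSeries.order_one]
    | succ n ih =>
      rw [pow_succ, PowerSeries.order_mul, ih, ordY j hj1 hjs]
      push_cast
      ring
  -- order bookkeeping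
  set ord1 : PowerSeries ℂ → ℕ := fun f => f.order.toNat with hord1
  set O : ℕ → ℕ → Polynomial (PowerSeries ℂ) → ℕ :=
    fun j ℓ h => e j * ord1 (h.coeff ℓ) + ℓ * E j 1 with hO
  have ord1_eq : ∀ f : PowerSeries ℂ, f ≠ 0 → f.order = (ord1 f : ℕ∞) := by
    intro f hf
    exact (ENat.coe_toNat (by rwa [ne_eq, PowerSeries.order_eq_top])).symm
  have OjO1 : ∀ j, 1 ≤ j → j ≤ s → ∀ h ℓ, e 1 * O j ℓ h = e j * O 1 ℓ h := by
    intro j hj1 hjs h ℓ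
    simp only [hO]
    have hej := EJ j hj1 hjs
    generalize ord1 (h.coeff ℓ) = x
    calc e 1 * (e j * x + ℓ * E j 1) = e j * (e 1 * x) + ℓ * (e 1 * E j 1) := by ring
      _ = e j * (e 1 * x) + ℓ * (e j * E 1 1) := by rw [hej]
      _ = e j * (e 1 * x + ℓ * E 1 1) := by ring
  have Olt : ∀ j, 1 ≤ j → j ≤ s → ∀ h h' ℓ ℓ',
      O 1 ℓ h < O 1 ℓ' h' → O j ℓ h < O j ℓ' h' := by
    intro j hj1 hjs h h' ℓ ℓ' hlt
    have h1 : e j * O 1 ℓ h < e j * O 1 ℓ' h' :=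
      (Nat.mul_lt_mul_left (epos j hjs)).mpr hlt
    rw [← OjO1 j hj1 hjs, ← OjO1 j hj1 hjs] at h1
    exact Nat.lt_of_mul_lt_mul_left h1
  -- the engine
  have engine : ∀ (h : Polynomial (PowerSeries ℂ)) (τ : ℕ), τ ∈ h.support →
      (∀ σ ∈ h.support, σ ≠ τ → O 1 τ h < O 1 σ h) →
      ∀ j, 1 ≤ j → j ≤ s →
        (iotaPS (e j) ((Y j : Polynomial ℂ) : PowerSeries ℂ) h).order = (O j τ h : ℕ∞) := by
    intro h τ hτ hmin j hj1 hjs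
    have hords : ∀ σ ∈ h.support,
        (expandPS (e j) (h.coeff σ) * ((Y j : Polynomial ℂ) : PowerSeries ℂ) ^ σ).order
          = ((O j σ h : ℕ) : ℕ∞) := by
      intro σ hσ
      have hcoeff : h.coeff σ ≠ 0 := Polynomial.mem_support_iff.mp hσ
      rw [PowerSeries.order_mul,
        order_expandPS (epos j hjs) (ord1_eq _ hcoeff), ordYpow j hj1 hjs σ]
      simp only [hO]
      push_cast
      ring
    rw [iotaPS]
    refine order_finsum _ _ τ hτ _ (hords τ hτ) (fun σ hσ hne => ?_)
    rw [hords σ hσ]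
    exact_mod_cast Olt j hj1 hjs h h τ σ (hmin σ hσ hne)
  -- facts about numeric casts in derivatives
  have hnz : ∀ n : ℕ, ((n : PowerSeries ℂ) + 1) ≠ 0 := by
    intro n hcontr
    have h2 : ((n : ℂ) + 1) = 0 := by
      have := congrArg (PowerSeries.constantCoeff) hcontr
      simpa using this
    have : ((n : ℂ) + 1) ≠ 0 := by exact_mod_cast (Nat.cast_ne_zero (R := ℂ)).mpr (Nat.succ_ne_zero n)
    exact this h2
  have ord_natcast : ∀ n : ℕ, ((n : PowerSeries ℂ) + 1).order = (0 : ℕ∞) := by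
    intro n
    rw [show ((0 : ℕ∞)) = ((0 : ℕ) : ℕ∞) from rfl, PowerSeries.order_eq_nat]
    constructor
    · rw [PowerSeries.coeff_zero_eq_constantCoeff]
      simp only [map_add, map_natCast, map_one]
      exact_mod_cast (Nat.cast_ne_zero (R := ℂ)).mpr (Nat.succ_ne_zero n)
    · exact fun i hi => absurd hi (Nat.not_lt_zero i)
  -- the main argument
  intro g hg0 hgdeg
  have hSne : g.support.Nonempty := Polynomial.support_nonempty.mpr hg0
  obtain ⟨τ, hτS, hτmin⟩ := Finset.exists_min_image g.support (fun ℓ => O 1 ℓ g) hSne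
  have hbound : ∀ σ ∈ g.support, σ < e 1 := fun σ hσ =>
    lt_of_le_of_lt (Polynomial.le_natDegree_of_mem_supp σ hσ) hgdeg
  have hstrict : ∀ σ ∈ g.support, σ ≠ τ → O 1 τ g < O 1 σ g := by
    intro σ hσ hne
    rcases lt_or_eq_of_le (hτmin σ hσ) with h | h
    · exact h
    · exfalso
      have h' : e 1 * ord1 (g.coeff σ) + σ * E 1 1
          = e 1 * ord1 (g.coeff τ) + τ * E 1 1 := by
        simpa only [hO] using h.symm
      exact hne (tau_unique cop (hbound σ hσ) (hbound τ hτS) h')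
  have mono_engine : ∀ τ', τ' ∈ g.support → ∀ j, 1 ≤ j → j ≤ s →
      (iotaPS (e j) ((Y j : Polynomial ℂ) : PowerSeries ℂ)
        (Polynomial.C (g.coeff τ') * Polynomial.X ^ τ')).order = (O j τ' g : ℕ∞) := by
    intro τ' hτ' j hj1 hjs
    have ha : g.coeff τ' ≠ 0 := Polynomial.mem_support_iff.mp hτ'
    have hsupp : (Polynomial.C (g.coeff τ') * Polynomial.X ^ τ').support = {τ'} :=
      Polynomial.support_C_mul_X_pow τ' ha
    have hcoeff : (Polynomial.C (g.coeff τ') * Polynomial.X ^ τ').coeff τ' = g.coeff τ' := by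
      simp [Polynomial.coeff_C_mul, Polynomial.coeff_X_pow]
    have heng := engine (Polynomial.C (g.coeff τ') * Polynomial.X ^ τ') τ'
      (by rw [hsupp]; exact Finset.mem_singleton_self τ')
      (by intro σ hσ hne
          rw [hsupp, Finset.mem_singleton] at hσ
          exact absurd hσ hne) j hj1 hjs
    have hce : O j τ' (Polynomial.C (g.coeff τ') * Polynomial.X ^ τ') = O j τ' g := by
      simp only [hO, hcoeff]
    rw [heng, hce]
  -- derivative bookkeeping
  set g' := Polynomial.derivative g with hg'
  have hg'supp : ∀ n : ℕ, g'.coeff n ≠ 0 ↔ g.coeff (n + 1) ≠ 0 := by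
    intro n
    rw [hg', Polynomial.coeff_derivative, mul_ne_zero_iff]
    constructor
    · exact fun h => h.1
    · exact fun h => ⟨h, hnz n⟩
  have hg'O : ∀ j, 1 ≤ j → j ≤ s → ∀ n : ℕ, g.coeff (n + 1) ≠ 0 →
      O j n g' + E j 1 = O j (n + 1) g := by
    intro j hj1 hjs n hn
    have hordeq : ord1 (g'.coeff n) = ord1 (g.coeff (n + 1)) := by
      have h1 : (g'.coeff n).order = (g.coeff (n + 1)).order := by
        rw [hg', Polynomial.coeff_derivative, PowerSeries.order_mul, ord_natcast n, add_zero]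
      simp only [hord1, h1]
    simp only [hO, hordeq]
    ring
  refine ⟨τ, (O 1 τ g : ℚ), Polynomial.le_natDegree_of_mem_supp τ hτS,
    Polynomial.mem_support_iff.mp hτS, ?_, ?_, ?_, ?_⟩
  · rw [engine g τ hτS hstrict 1 le_rfl hs, mono_engine τ hτS 1 le_rfl hs]
  · intro τ' hτ'deg hτ'c heq
    have hτ'S : τ' ∈ g.support := Polynomial.mem_support_iff.mpr hτ'c
    rw [engine g τ hτS hstrict 1 le_rfl hs, mono_engine τ' hτ'S 1 le_rfl hs] at heq
    have heqn : O 1 τ g = O 1 τ' g := by exact_mod_cast heq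
    have h' : e 1 * ord1 (g.coeff τ) + τ * E 1 1
        = e 1 * ord1 (g.coeff τ') + τ' * E 1 1 := by
      simpa only [hO] using heqn
    exact (tau_unique cop (hbound τ hτS) (hbound τ' hτ'S) h').symm
  · exact psOrdQ_coe (engine g τ hτS hstrict 1 le_rfl hs)
  · intro j hj1 hjs
    have hmq : ((O j τ g : ℕ) : ℚ) = (e j : ℚ) / (e 1 : ℚ) * ((O 1 τ g : ℕ) : ℚ) := by
      have hc1 : ((e 1 : ℕ) : ℚ) * ((O j τ g : ℕ) : ℚ)
          = ((e j : ℕ) : ℚ) * ((O 1 τ g : ℕ) : ℚ) := by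
        exact_mod_cast congrArg (Nat.cast (R := ℚ)) (OjO1 j hj1 hjs g τ)
      have he10 : ((e 1 : ℕ) : ℚ) ≠ 0 := by
        exact_mod_cast e1pos.ne'
      field_simp
      linarith
    have hEj1q : ((E j 1 : ℕ) : ℚ) = (e j : ℚ) * lam 1 := hE j hj1 hjs 1 le_rfl hj1
    refine ⟨?_, ?_, ?_⟩
    · rw [psOrdQ_coe (engine g τ hτS hstrict j hj1 hjs)]
      exact congrArg (fun q : ℚ => (q : WithTop ℚ)) hmq
    · intro hτ0
      have hτ1 : τ - 1 + 1 = τ := by omega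
      have hcτ : g.coeff τ ≠ 0 := Polynomial.mem_support_iff.mp hτS
      have hc' : g'.coeff (τ - 1) ≠ 0 := by
        rw [hg'supp (τ - 1), hτ1]; exact hcτ
      have hmem' : τ - 1 ∈ g'.support := Polynomial.mem_support_iff.mpr hc'
      have hmin' : ∀ σ ∈ g'.support, σ ≠ τ - 1 → O 1 (τ - 1) g' < O 1 σ g' := by
        intro σ hσ hne
        have hcσ : g.coeff (σ + 1) ≠ 0 := (hg'supp σ).mp (Polynomial.mem_support_iff.mp hσ)
        have hmemσ : σ + 1 ∈ g.support := Polynomial.mem_support_iff.mpr hcσ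
        have hlt := hstrict (σ + 1) hmemσ (by omega)
        have e1' := hg'O 1 le_rfl hs σ hcσ
        have e2' := hg'O 1 le_rfl hs (τ - 1) (by rw [hτ1]; exact hcτ)
        rw [hτ1] at e2'
        omega
      have hordg' := engine g' (τ - 1) hmem' hmin' j hj1 hjs
      rw [psOrdQ_coe hordg']
      have e2' := hg'O j hj1 hjs (τ - 1) (by rw [hτ1]; exact hcτ)
      rw [hτ1] at e2'
      have hq : ((O j (τ - 1) g' : ℕ) : ℚ) + ((E j 1 : ℕ) : ℚ) = ((O j τ g : ℕ) : ℚ) := by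
        exact_mod_cast congrArg (Nat.cast (R := ℚ)) e2'
      have keyq : ((O j (τ - 1) g' : ℕ) : ℚ)
          = (e j : ℚ) / (e 1 : ℚ) * ((O 1 τ g : ℕ) : ℚ) - (e j : ℚ) * lam 1 := by
        linarith
      exact congrArg (fun q : ℚ => (q : WithTop ℚ)) keyq
    · intro hτ0
      by_cases hg'0 : g' = 0
      · have hzero : iotaPS (e j) ((Y j : Polynomial ℂ) : PowerSeries ℂ)
            (0 : Polynomial (PowerSeries ℂ)) = 0 := by
          simp [iotaPS]
        rw [hg'0, hzero]
        have htop : psOrdQ 0 = ⊤ := by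
          simp [psOrdQ, PowerSeries.order_zero]; rfl
        rw [htop]
        exact WithTop.coe_lt_top _
      · have hSne' : g'.support.Nonempty := Polynomial.support_nonempty.mpr hg'0
        obtain ⟨μ, hμS, hμmin⟩ := Finset.exists_min_image g'.support (fun ℓ => O 1 ℓ g') hSne'
        have hcμ : g.coeff (μ + 1) ≠ 0 := (hg'supp μ).mp (Polynomial.mem_support_iff.mp hμS)
        have hμmem : μ + 1 ∈ g.support := Polynomial.mem_support_iff.mpr hcμ
        have hstrict' : ∀ σ ∈ g'.support, σ ≠ μ → O 1 μ g' < O 1 σ g' := by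
          intro σ hσ hne
          rcases lt_or_eq_of_le (hμmin σ hσ) with h | h
          · exact h
          · exfalso
            have hcσ : g.coeff (σ + 1) ≠ 0 := (hg'supp σ).mp (Polynomial.mem_support_iff.mp hσ)
            have e1' := hg'O 1 le_rfl hs σ hcσ
            have e2' := hg'O 1 le_rfl hs μ hcμ
            have heqO : O 1 (μ + 1) g = O 1 (σ + 1) g := by omega
            have hb1 : μ + 1 < e 1 := hbound _ hμmem
            have hb2 : σ + 1 < e 1 := hbound _ (Polynomial.mem_support_iff.mpr hcσ)
            have h' : e 1 * ord1 (g.coeff (μ + 1)) + (μ + 1) * E 1 1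
                = e 1 * ord1 (g.coeff (σ + 1)) + (σ + 1) * E 1 1 := by
              simpa only [hO] using heqO
            have := tau_unique cop hb1 hb2 h'
            omega
        have hordg' := engine g' μ hμS hstrict' j hj1 hjs
        rw [psOrdQ_coe hordg', WithTop.coe_lt_coe]
        have e2' := hg'O j hj1 hjs μ hcμ
        have hgt : O j τ g < O j (μ + 1) g :=
          Olt j hj1 hjs g g τ (μ + 1) (hstrict (μ + 1) hμmem (by omega))
        have hq : ((O j μ g' : ℕ) : ℚ) + ((E j 1 : ℕ) : ℚ) = ((O j (μ + 1) g : ℕ) : ℚ) := by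
          exact_mod_cast congrArg (Nat.cast (R := ℚ)) e2'
        have hgtq : ((O j τ g : ℕ) : ℚ) < ((O j (μ + 1) g : ℕ) : ℚ) := by exact_mod_cast hgt
        linarith
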